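/- Every directed path in G that starts at g_{n−1}, ends at a vertex of C ∪ R⁻¹(E(G)), and all of whose internal vertices lie outside C ∪ R⁻¹(E(G)), ends at some z_i with i ∈ {1,…,m}, and its sequence of edges is (g_{n−1},a_n) followed by either (a_n,b_n),(b_n,e_n),(e_n,d_n) or (a_n,c_n),(c_n,f_n),(f_n,d_n), followed by (d_n,g_n),(g_n,x₁),(x₁,x₂),…,(x_{i−1},x_i),(x_i,y_i),(y_i,z_i). -/

import Mathlib

namespace PhutballQBF

/-- A literal: a variable `xₗ` (`pos l`) or its negation `¬xₗ` (`neg l`). -/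
inductive Lit where
  | pos (l : ℕ)
  | neg (l : ℕ)
deriving DecidableEq

/-- The index of the variable occurring in a literal. -/
def Lit.var : Lit → ℕ
  | .pos l => l
  | .neg l => l

/-- Evaluation of a literal under a Boolean assignment. -/
def Lit.eval (σ : ℕ → Bool) : Lit → Bool
  | .pos l => σ l
  | .neg l => !(σ l)

/-- Well-formedness of the 3CNF `F = F₁ ∧ ⋯ ∧ F_m`: the literal `l_{i,j}` (for
`1 ≤ i ≤ m`, `1 ≤ j ≤ 3`) mentions one of the variables `x₁, …, xₙ`. -/
def LitWF (n m : ℕ) (lit : ℕ → ℕ → Lit) : Prop :=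
  ∀ i j, 1 ≤ i → i ≤ m → 1 ≤ j → j ≤ 3 → 1 ≤ (lit i j).var ∧ (lit i j).var ≤ n

/-- The clause `Fᵢ = (l_{i,1} ∨ l_{i,2} ∨ l_{i,3})` evaluates to true under `σ`. -/
def ClauseTrue (lit : ℕ → ℕ → Lit) (i : ℕ) (σ : ℕ → Bool) : Prop :=
  ∃ j, 1 ≤ j ∧ j ≤ 3 ∧ (lit i j).eval σ = true

/-- The 3CNF formula `F = F₁ ∧ ⋯ ∧ F_m` evaluates to true under `σ`. -/
def FTrue (lit : ℕ → ℕ → Lit) (m : ℕ) (σ : ℕ → Bool) : Prop :=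
  ∀ i, 1 ≤ i → i ≤ m → ClauseTrue lit i σ

/-- `QAux P i k σ`: the quantified statement with `k` variables `x_i, …, x_{i+k-1}`
still to be quantified (existentially when the index is odd, universally when even),
the remaining variables having the values recorded in `σ`. -/
def QAux (P : (ℕ → Bool) → Prop) : ℕ → ℕ → (ℕ → Bool) → Prop
  | _, 0, σ => P σ
  | i, k + 1, σ =>
      if i % 2 = 1 then ∃ b, QAux P (i + 1) k (Function.update σ i b)
      else ∀ b, QAux P (i + 1) k (Function.update σ i b)

/-- Truth of the restricted quantified Boolean formula
`Q = ∃x₁ ∀x₂ ∃x₃ ⋯ ∀xₙ F(x₁, …, xₙ)`. -/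
def QTrue (n m : ℕ) (lit : ℕ → ℕ → Lit) : Prop :=
  QAux (FTrue lit m) 1 n (fun _ => false)

/-- The vertices of the graph `G` built from `Q` (with natural-number indices;
`g 0` is the extra vertex `g₀`). -/
inductive Vtx where
  | a (i : ℕ) | b (i : ℕ) | c (i : ℕ) | d (i : ℕ) | e (i : ℕ) | f (i : ℕ) | g (i : ℕ)
  | x (i : ℕ) | y (i : ℕ) | z (i : ℕ) | w (i : ℕ) (j : ℕ)
deriving DecidableEq

/-- A directed edge. -/
abbrev Edge := Vtx × Vtx

/-- The edge set `E(G)` of the graph `G` constructed from `Q` (with `n` variables and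
`m` clauses): the variable components `G(xᵢ)`, the connecting edges `(gᵢ, aᵢ₊₁)` for
`i = 0, …, n-1`, the edge `(gₙ, x₁)`, and the formula component `G(F)`. -/
def EG (n m : ℕ) : Set Edge :=
  { p | (∃ i, 1 ≤ i ∧ i ≤ n ∧
          (p = (Vtx.a i, Vtx.b i) ∨ p = (Vtx.a i, Vtx.c i) ∨ p = (Vtx.b i, Vtx.e i) ∨
           p = (Vtx.c i, Vtx.f i) ∨ p = (Vtx.e i, Vtx.d i) ∨ p = (Vtx.f i, Vtx.d i) ∨
           p = (Vtx.d i, Vtx.g i))) ∨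
        (∃ i, i ≤ n - 1 ∧ p = (Vtx.g i, Vtx.a (i + 1))) ∨
        p = (Vtx.g n, Vtx.x 1) ∨
        (∃ i, 1 ≤ i ∧ i ≤ m ∧
          (p = (Vtx.x i, Vtx.y i) ∨ p = (Vtx.y i, Vtx.z i) ∨ p = (Vtx.z i, Vtx.w i 1) ∨
           p = (Vtx.w i 1, Vtx.w i 2) ∨ p = (Vtx.w i 2, Vtx.w i 3))) ∨
        (∃ i, 1 ≤ i ∧ i ≤ m - 1 ∧ p = (Vtx.x i, Vtx.x (i + 1))) }

/-- The set `C = {g₀, g₁, …, g_{n-1}} ∪ {z₁, …, z_m}`. -/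
def Cset (n m : ℕ) : Set Vtx :=
  { v | (∃ i, i ≤ n - 1 ∧ v = Vtx.g i) ∨ (∃ i, 1 ≤ i ∧ i ≤ m ∧ v = Vtx.z i) }

/-- The relation `R ⊆ V(G) × E(G)`: `(w_{i,j}, (bₗ, eₗ)) ∈ R` iff `l_{i,j} = xₗ`, and
`(w_{i,j}, (cₗ, fₗ)) ∈ R` iff `l_{i,j} = ¬xₗ`. -/
def Rrel (lit : ℕ → ℕ → Lit) (m : ℕ) : Set (Vtx × Edge) :=
  { p | ∃ i j, 1 ≤ i ∧ i ≤ m ∧ 1 ≤ j ∧ j ≤ 3 ∧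
        ((∃ l, lit i j = Lit.pos l ∧ p = (Vtx.w i j, (Vtx.b l, Vtx.e l))) ∨
         (∃ l, lit i j = Lit.neg l ∧ p = (Vtx.w i j, (Vtx.c l, Vtx.f l)))) }

/-- `Rinv R E = R⁻¹(E)`: the vertices pointing some edge of `E`. -/
def Rinv (R : Set (Vtx × Edge)) (E : Set Edge) : Set Vtx :=
  { v | ∃ e ∈ E, (v, e) ∈ R }

/-- The set of (directed) edges traversed by a path given as its list of vertices. -/
def pathEdges (p : List Vtx) : Set Edge := { e | e ∈ p.zip p.tail }

/-- A legal move of the graph game from active vertex `u ∈ C` with current edge set `E`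
along the directed path `p` (a list of at least two pairwise distinct vertices whose
consecutive pairs are edges of `E`), ending at a vertex `v ∈ C ∪ R⁻¹(E)`, with all
internal vertices of `p` outside `C ∪ R⁻¹(E)`; the resulting edge set `E'` is obtained
by deleting the edges of `p` from `E`. -/
def LegalMoveVia (C : Set Vtx) (R : Set (Vtx × Edge))
    (u : Vtx) (E : Set Edge) (v : Vtx) (E' : Set Edge) (p : List Vtx) : Prop :=
  u ∈ C ∧ v ∈ C ∪ Rinv R E ∧
  2 ≤ p.length ∧ p.Nodup ∧
  p.head? = some u ∧ p.getLast? = some v ∧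
  List.Chain' (fun a b => (a, b) ∈ E) p ∧
  (∀ w ∈ (p.drop 1).dropLast, w ∉ C ∪ Rinv R E) ∧
  E' = E \ pathEdges p

/-- A legal move from `(u, E)` to `(v, E')` (along some path). -/
def LegalMove (C : Set Vtx) (R : Set (Vtx × Edge))
    (u : Vtx) (E : Set Edge) (v : Vtx) (E' : Set Edge) : Prop :=
  ∃ p, LegalMoveVia C R u E v E' p

/-- `MoverWins C R true u E` says that the player to move at the position with active
vertex `u` and current edge set `E` has a winning strategy; `MoverWins C R false u E`
says that the player to move loses whatever he does (in particular, if he has no legal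
move he loses immediately; a move to a vertex of `R⁻¹(E)` wins the game for the mover). -/
inductive MoverWins (C : Set Vtx) (R : Set (Vtx × Edge)) : Bool → Vtx → Set Edge → Prop
  | winsNow {u E v E'} : LegalMove C R u E v E' → v ∈ Rinv R E →
      MoverWins C R true u E
  | winsLater {u E v E'} : LegalMove C R u E v E' → MoverWins C R false v E' →
      MoverWins C R true u E
  | loses {u E} :
      (∀ v E', LegalMove C R u E v E' → v ∉ Rinv R E) →
      (∀ v E', LegalMove C R u E v E' → MoverWins C R true v E') →
      MoverWins C R false u E

/-- The two players of the graph game. -/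
inductive Player where
  | ex | fa
deriving DecidableEq

/-- The opponent of a player. -/
def Player.other : Player → Player
  | .ex => .fa
  | .fa => .ex

/-- A (maximal) play of the graph game on `(G, C, s, R)` starting from active vertex `s`
and edge set `E0`, with the ∃-player moving first.  `act k` and `edg k` are the active
vertex and edge set after `k` moves, `turn k` is the player who makes the `(k+1)`-st
move, and `len` is the total number of moves.  The play stops either because its last
move reached a vertex of `R⁻¹(E)` (the mover wins) or because the player to move has no
legal move (he loses); before that, no move may end in `R⁻¹(E)` without stopping. -/
structure Play (C : Set Vtx) (R : Set (Vtx × Edge)) (s : Vtx) (E0 : Set Edge) where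
  len : ℕ
  act : ℕ → Vtx
  edg : ℕ → Set Edge
  turn : ℕ → Player
  init_act : act 0 = s
  init_edg : edg 0 = E0
  init_turn : turn 0 = Player.ex
  turn_alt : ∀ k, turn (k + 1) = (turn k).other
  step : ∀ k, k < len → LegalMove C R (act k) (edg k) (act (k + 1)) (edg (k + 1))
  not_over : ∀ k, k + 1 < len → act (k + 1) ∉ Rinv R (edg k)
  maximal : (0 < len ∧ act len ∈ Rinv R (edg (len - 1))) ∨
            (∀ v E', ¬ LegalMove C R (act len) (edg len) v E')


section Aux

variable {n m : ℕ} {v : Vtx}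

private lemma succ_g_pred (hn2 : 2 ≤ n) (h : (Vtx.g (n-1), v) ∈ EG n m) : v = Vtx.a n := by
  simp only [EG, Set.mem_setOf_eq, Prod.mk.injEq] at h
  rcases h with ⟨i,h1,h2,h|h|h|h|h|h|h⟩ | ⟨i,h1,h⟩ | h | ⟨i,h1,h2,h|h|h|h|h⟩ | ⟨i,h1,h2,h⟩ <;>
    simp_all <;> omega

private lemma succ_gn (hn2 : 2 ≤ n) (h : (Vtx.g n, v) ∈ EG n m) : v = Vtx.x 1 := by
  simp only [EG, Set.mem_setOf_eq, Prod.mk.injEq] at h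
  rcases h with ⟨i,h1,h2,h|h|h|h|h|h|h⟩ | ⟨i,h1,h⟩ | h | ⟨i,h1,h2,h|h|h|h|h⟩ | ⟨i,h1,h2,h⟩ <;>
    simp_all <;> omega

private lemma succ_a {l : ℕ} (h : (Vtx.a l, v) ∈ EG n m) : v = Vtx.b l ∨ v = Vtx.c l := by
  simp only [EG, Set.mem_setOf_eq, Prod.mk.injEq] at h
  rcases h with ⟨i,h1,h2,h|h|h|h|h|h|h⟩ | ⟨i,h1,h⟩ | h | ⟨i,h1,h2,h|h|h|h|h⟩ | ⟨i,h1,h2,h⟩ <;>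
    simp_all

private lemma succ_b {l : ℕ} (h : (Vtx.b l, v) ∈ EG n m) : v = Vtx.e l := by
  simp only [EG, Set.mem_setOf_eq, Prod.mk.injEq] at h
  rcases h with ⟨i,h1,h2,h|h|h|h|h|h|h⟩ | ⟨i,h1,h⟩ | h | ⟨i,h1,h2,h|h|h|h|h⟩ | ⟨i,h1,h2,h⟩ <;>
    simp_all

private lemma succ_c {l : ℕ} (h : (Vtx.c l, v) ∈ EG n m) : v = Vtx.f l := by
  simp only [EG, Set.mem_setOf_eq, Prod.mk.injEq] at h
  rcases h with ⟨i,h1,h2,h|h|h|h|h|h|h⟩ | ⟨i,h1,h⟩ | h | ⟨i,h1,h2,h|h|h|h|h⟩ | ⟨i,h1,h2,h⟩ <;>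
    simp_all

private lemma succ_e {l : ℕ} (h : (Vtx.e l, v) ∈ EG n m) : v = Vtx.d l := by
  simp only [EG, Set.mem_setOf_eq, Prod.mk.injEq] at h
  rcases h with ⟨i,h1,h2,h|h|h|h|h|h|h⟩ | ⟨i,h1,h⟩ | h | ⟨i,h1,h2,h|h|h|h|h⟩ | ⟨i,h1,h2,h⟩ <;>
    simp_all

private lemma succ_f {l : ℕ} (h : (Vtx.f l, v) ∈ EG n m) : v = Vtx.d l := by
  simp only [EG, Set.mem_setOf_eq, Prod.mk.injEq] at h
  rcases h with ⟨i,h1,h2,h|h|h|h|h|h|h⟩ | ⟨i,h1,h⟩ | h | ⟨i,h1,h2,h|h|h|h|h⟩ | ⟨i,h1,h2,h⟩ <;>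
    simp_all

private lemma succ_d {l : ℕ} (h : (Vtx.d l, v) ∈ EG n m) : v = Vtx.g l := by
  simp only [EG, Set.mem_setOf_eq, Prod.mk.injEq] at h
  rcases h with ⟨i,h1,h2,h|h|h|h|h|h|h⟩ | ⟨i,h1,h⟩ | h | ⟨i,h1,h2,h|h|h|h|h⟩ | ⟨i,h1,h2,h⟩ <;>
    simp_all

private lemma succ_x {l : ℕ} (h : (Vtx.x l, v) ∈ EG n m) :
    v = Vtx.y l ∨ (v = Vtx.x (l+1) ∧ l ≤ m - 1) := by
  simp only [EG, Set.mem_setOf_eq, Prod.mk.injEq] at h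
  rcases h with ⟨i,h1,h2,h|h|h|h|h|h|h⟩ | ⟨i,h1,h⟩ | h | ⟨i,h1,h2,h|h|h|h|h⟩ | ⟨i,h1,h2,h⟩ <;>
    simp_all

private lemma succ_y {l : ℕ} (h : (Vtx.y l, v) ∈ EG n m) : v = Vtx.z l := by
  simp only [EG, Set.mem_setOf_eq, Prod.mk.injEq] at h
  rcases h with ⟨i,h1,h2,h|h|h|h|h|h|h⟩ | ⟨i,h1,h⟩ | h | ⟨i,h1,h2,h|h|h|h|h⟩ | ⟨i,h1,h2,h⟩ <;>
    simp_all

private lemma shapeCR {lit : ℕ → ℕ → Lit} {E : Set Edge}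
    (hv : v ∈ Cset n m ∪ Rinv (Rrel lit m) E) :
    (∃ i, i ≤ n-1 ∧ v = Vtx.g i) ∨ (∃ i, 1 ≤ i ∧ i ≤ m ∧ v = Vtx.z i) ∨
      ∃ i j, v = Vtx.w i j := by
  rcases hv with h | h
  · rcases h with ⟨i, h1, h2⟩ | ⟨i, h1, h2, h3⟩
    · exact Or.inl ⟨i, h1, h2⟩
    · exact Or.inr (Or.inl ⟨i, h1, h2, h3⟩)
  · rcases h with ⟨e, _, hr⟩
    rcases hr with ⟨i, j, _, _, _, _, ⟨l, _, hp⟩ | ⟨l, _, hp⟩⟩ <;>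
      exact Or.inr (Or.inr ⟨i, j, congrArg Prod.fst hp⟩)

private lemma z_mem_Cset {i : ℕ} (h1 : 1 ≤ i) (h2 : i ≤ m) : Vtx.z i ∈ Cset n m :=
  Or.inr ⟨i, h1, h2, rfl⟩

private lemma mem_int {s : List Vtx} {u : Vtx} (h : u ∈ (s.drop 1).dropLast) :
    u ∈ s.dropLast := by
  rcases s with _ | ⟨a, t⟩
  · simp at h
  · rcases t with _ | ⟨b, t'⟩
    · simp at h
    · simp only [List.drop_one, List.tail_cons] at h
      rw [List.dropLast_cons₂]
      exact List.mem_cons_of_mem _ h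

private lemma xchain (lit : ℕ → ℕ → Lit) (q : List Vtx) :
    ∀ i v, 1 ≤ i → i ≤ m →
    q.head? = some (Vtx.x i) → q.getLast? = some v →
    List.Chain' (fun a b => (a, b) ∈ EG n m) q →
    (∀ u ∈ (q.drop 1).dropLast, u ∉ Cset n m ∪ Rinv (Rrel lit m) (EG n m)) →
    v ∈ Cset n m ∪ Rinv (Rrel lit m) (EG n m) →
    ∃ i', i ≤ i' ∧ i' ≤ m ∧ v = Vtx.z i' ∧
      q = (List.range' i (i' - i + 1)).map Vtx.x ++ [Vtx.y i', Vtx.z i'] := by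
  induction q with
  | nil => intro i v _ _ h _ _ _ _; simp at h
  | cons u q' ih =>
    intro i v hi1 hi2 hhead hlast hchain hint hv
    simp only [List.head?_cons, Option.some_inj] at hhead
    subst hhead
    rcases q' with _ | ⟨h1, q''⟩
    · -- v = x i, contradiction
      simp only [List.getLast?_singleton, Option.some_inj] at hlast
      subst hlast
      rcases shapeCR hv with ⟨i', _, h⟩ | ⟨i', _, _, h⟩ | ⟨i', j, h⟩ <;> simp at h
    · simp only [List.Chain', List.isChain_cons_cons] at hchain
      rcases succ_x hchain.1 with hy | ⟨hx, him⟩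
      · -- h1 = y i
        subst hy
        rcases q'' with _ | ⟨h2, q'''⟩
        · -- v = y i, contradiction
          simp only [List.getLast?_cons_cons, List.getLast?_singleton, Option.some_inj] at hlast
          subst hlast
          rcases shapeCR hv with ⟨i', _, h⟩ | ⟨i', _, _, h⟩ | ⟨i', j, h⟩ <;> simp at h
        · simp only [List.Chain', List.isChain_cons_cons] at hchain
          have hz := succ_y hchain.2.1
          subst hz
          rcases q''' with _ | ⟨h3, q4⟩
          · -- q = [x i, y i, z i]
            simp only [List.getLast?_cons_cons, List.getLast?_singleton,
              Option.some_inj] at hlast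
            refine ⟨i, le_refl i, hi2, hlast.symm, ?_⟩
            have h1 : i - i + 1 = 1 := by omega
            rw [h1, List.range'_one]
            rfl
          · -- z i internal: contradiction
            exfalso
            refine hint (Vtx.z i) ?_ (Or.inl (z_mem_Cset hi1 hi2))
            simp [List.dropLast_cons₂]
      · -- h1 = x (i+1)
        subst hx
        have him' : i + 1 ≤ m := by omega
        have hsub : ∀ u ∈ ((Vtx.x (i+1) :: q'').drop 1).dropLast,
            u ∉ Cset n m ∪ Rinv (Rrel lit m) (EG n m) := by
          intro u hu
          exact hint u (mem_int hu)
        obtain ⟨i', hi'1, hi'2, hv', hq⟩ := ih (i+1) v (by omega) him' (by simp)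
          (by rw [← hlast]; simp) hchain.2 hsub hv
        refine ⟨i', by omega, hi'2, hv', ?_⟩
        have harith : i' - i + 1 = (i' - (i+1) + 1) + 1 := by omega
        rw [harith, List.range'_succ]
        simp only [List.map_cons, List.cons_append]
        rw [hq]

private lemma mem_cons_dropLast {a u : Vtx} {s : List Vtx} (h : u ∈ s.dropLast) :
    u ∈ (a :: s).dropLast := by
  cases s with
  | nil => simp at h
  | cons b t => rw [List.dropLast_cons₂]; exact List.mem_cons_of_mem _ h

private lemma dchain {n m : ℕ} (hn2 : 2 ≤ n) (hm : 1 ≤ m) (lit : ℕ → ℕ → Lit)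
    (s : List Vtx) (v : Vtx)
    (hhead : s.head? = some (Vtx.d n)) (hlast : s.getLast? = some v)
    (hchain : List.Chain' (fun a b => (a, b) ∈ EG n m) s)
    (hint : ∀ u ∈ (s.drop 1).dropLast, u ∉ Cset n m ∪ Rinv (Rrel lit m) (EG n m))
    (hv : v ∈ Cset n m ∪ Rinv (Rrel lit m) (EG n m)) :
    ∃ i, 1 ≤ i ∧ i ≤ m ∧ v = Vtx.z i ∧
      s = Vtx.d n :: Vtx.g n ::
        (((List.range i).map fun k => Vtx.x (k+1)) ++ [Vtx.y i, Vtx.z i]) := by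
  rcases s with _ | ⟨v0, s1⟩
  · simp at hhead
  simp only [List.head?_cons, Option.some_inj] at hhead; subst hhead
  rcases s1 with _ | ⟨v1, s2⟩
  · simp only [List.getLast?_singleton, Option.some_inj] at hlast; subst hlast
    rcases shapeCR hv with ⟨i',_,h⟩|⟨i',_,_,h⟩|⟨i',j,h⟩ <;> simp at h
  simp only [List.Chain', List.isChain_cons_cons] at hchain
  obtain ⟨e0, hchain⟩ := hchain
  obtain rfl := succ_d e0
  rcases s2 with _ | ⟨v2, s3⟩
  · simp only [List.getLast?_cons_cons, List.getLast?_singleton, Option.some_inj] at hlast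
    subst hlast
    rcases shapeCR hv with ⟨i',hle,h⟩|⟨i',_,_,h⟩|⟨i',j,h⟩ <;> simp at h <;> omega
  simp only [List.Chain', List.isChain_cons_cons] at hchain
  obtain ⟨e1, hchain⟩ := hchain
  obtain rfl := succ_gn hn2 e1
  have hsub : ∀ u ∈ ((Vtx.x 1 :: s3).drop 1).dropLast,
      u ∉ Cset n m ∪ Rinv (Rrel lit m) (EG n m) := by
    intro u hu
    exact hint u (mem_cons_dropLast (mem_int hu))
  have hlast' : (Vtx.x 1 :: s3).getLast? = some v := by
    rw [← hlast]; simp [List.getLast?_cons_cons]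
  obtain ⟨i, hi1, hi2, hvz, hq⟩ := xchain lit (Vtx.x 1 :: s3) 1 v (le_refl 1) hm
    (by simp) hlast' hchain hsub hv
  have h11 : i - 1 + 1 = i := by omega
  rw [h11] at hq
  refine ⟨i, hi1, hi2, hvz, ?_⟩
  have hr : (List.range' 1 i).map Vtx.x = (List.range i).map fun k => Vtx.x (k+1) := by
    rw [List.range'_eq_map_range, List.map_map]
    exact List.map_congr_left fun k _ => by simp [Nat.add_comm]
  rw [hq, hr]

end Aux


/-- **Fact 2.** Every directed path in `G` (given by its list of vertices
`p`, with at least one edge and pairwise distinct vertices) that starts at `g_{n-1}`,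
ends at a vertex `v ∈ C ∪ R⁻¹(E(G))`, and all of whose internal vertices lie outside
`C ∪ R⁻¹(E(G))`, ends at some `zᵢ` with `i ∈ {1, …, m}`, and its sequence of edges is
`(g_{n-1},aₙ)` followed by either `(aₙ,bₙ),(bₙ,eₙ),(eₙ,dₙ)` or `(aₙ,cₙ),(cₙ,fₙ),(fₙ,dₙ)`,
followed by `(dₙ,gₙ),(gₙ,x₁),(x₁,x₂),…,(x_{i-1},xᵢ),(xᵢ,yᵢ),(yᵢ,zᵢ)`. -/
theorem path_from_last_variable_component
    (n m : ℕ) (hn : Even n) (hn2 : 2 ≤ n) (hm : 1 ≤ m)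
    (lit : ℕ → ℕ → Lit) (hwf : LitWF n m lit)
    (p : List Vtx) (v : Vtx)
    (hplen : 2 ≤ p.length) (hnd : p.Nodup)
    (hhead : p.head? = some (Vtx.g (n - 1)))
    (hlast : p.getLast? = some v)
    (hv : v ∈ Cset n m ∪ Rinv (Rrel lit m) (EG n m))
    (hchain : List.Chain' (fun a b => (a, b) ∈ EG n m) p)
    (hint : ∀ u ∈ (p.drop 1).dropLast, u ∉ Cset n m ∪ Rinv (Rrel lit m) (EG n m)) :
    ∃ i, 1 ≤ i ∧ i ≤ m ∧ v = Vtx.z i ∧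
      (p = [Vtx.g (n - 1), Vtx.a n, Vtx.b n, Vtx.e n, Vtx.d n, Vtx.g n] ++
             ((List.range i).map fun k => Vtx.x (k + 1)) ++ [Vtx.y i, Vtx.z i] ∨
       p = [Vtx.g (n - 1), Vtx.a n, Vtx.c n, Vtx.f n, Vtx.d n, Vtx.g n] ++
             ((List.range i).map fun k => Vtx.x (k + 1)) ++ [Vtx.y i, Vtx.z i]) := by
  rcases p with _ | ⟨v0, p1⟩
  · simp at hhead
  simp only [List.head?_cons, Option.some_inj] at hhead; subst hhead
  rcases p1 with _ | ⟨v1, p2⟩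
  · simp at hplen
  simp only [List.Chain', List.isChain_cons_cons] at hchain
  obtain ⟨e0, hchain⟩ := hchain
  obtain rfl := succ_g_pred hn2 e0
  rcases p2 with _ | ⟨v2, p3⟩
  · simp only [List.getLast?_cons_cons, List.getLast?_singleton, Option.some_inj] at hlast
    subst hlast
    rcases shapeCR hv with ⟨i',_,h⟩|⟨i',_,_,h⟩|⟨i',j,h⟩ <;> simp at h
  simp only [List.Chain', List.isChain_cons_cons] at hchain
  obtain ⟨e1, hchain⟩ := hchain
  rcases succ_a e1 with rfl | rfl
  · rcases p3 with _ | ⟨v3, p4⟩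
    · simp only [List.getLast?_cons_cons, List.getLast?_singleton, Option.some_inj] at hlast
      subst hlast
      rcases shapeCR hv with ⟨i',_,h⟩|⟨i',_,_,h⟩|⟨i',j,h⟩ <;> simp at h
    simp only [List.Chain', List.isChain_cons_cons] at hchain
    obtain ⟨e2, hchain⟩ := hchain
    obtain rfl := succ_b e2
    rcases p4 with _ | ⟨v4, p5⟩
    · simp only [List.getLast?_cons_cons, List.getLast?_singleton, Option.some_inj] at hlast
      subst hlast
      rcases shapeCR hv with ⟨i',_,h⟩|⟨i',_,_,h⟩|⟨i',j,h⟩ <;> simp at h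
    simp only [List.Chain', List.isChain_cons_cons] at hchain
    obtain ⟨e3, hchain⟩ := hchain
    obtain rfl := succ_e e3
    have hsub : ∀ u ∈ ((Vtx.d n :: p5).drop 1).dropLast,
        u ∉ Cset n m ∪ Rinv (Rrel lit m) (EG n m) := by
      intro u hu
      exact hint u (mem_cons_dropLast (mem_cons_dropLast (mem_cons_dropLast (mem_int hu))))
    have hlast' : (Vtx.d n :: p5).getLast? = some v := by
      rw [← hlast]; simp only [List.getLast?_cons_cons]
    obtain ⟨i, hi1, hi2, hvz, hq⟩ := dchain hn2 hm lit (Vtx.d n :: p5) v (by simp)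
      hlast' hchain hsub hv
    simp only [List.cons.injEq, true_and] at hq
    subst hq
    exact ⟨i, hi1, hi2, hvz, Or.inl (by simp)⟩
  · rcases p3 with _ | ⟨v3, p4⟩
    · simp only [List.getLast?_cons_cons, List.getLast?_singleton, Option.some_inj] at hlast
      subst hlast
      rcases shapeCR hv with ⟨i',_,h⟩|⟨i',_,_,h⟩|⟨i',j,h⟩ <;> simp at h
    simp only [List.Chain', List.isChain_cons_cons] at hchain
    obtain ⟨e2, hchain⟩ := hchain
    obtain rfl := succ_c e2
    rcases p4 with _ | ⟨v4, p5⟩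
    · simp only [List.getLast?_cons_cons, List.getLast?_singleton, Option.some_inj] at hlast
      subst hlast
      rcases shapeCR hv with ⟨i',_,h⟩|⟨i',_,_,h⟩|⟨i',j,h⟩ <;> simp at h
    simp only [List.Chain', List.isChain_cons_cons] at hchain
    obtain ⟨e3, hchain⟩ := hchain
    obtain rfl := succ_f e3
    have hsub : ∀ u ∈ ((Vtx.d n :: p5).drop 1).dropLast,
        u ∉ Cset n m ∪ Rinv (Rrel lit m) (EG n m) := by
      intro u hu
      exact hint u (mem_cons_dropLast (mem_cons_dropLast (mem_cons_dropLast (mem_int hu))))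
    have hlast' : (Vtx.d n :: p5).getLast? = some v := by
      rw [← hlast]; simp only [List.getLast?_cons_cons]
    obtain ⟨i, hi1, hi2, hvz, hq⟩ := dchain hn2 hm lit (Vtx.d n :: p5) v (by simp)
      hlast' hchain hsub hv
    simp only [List.cons.injEq, true_and] at hq
    subst hq
    exact ⟨i, hi1, hi2, hvz, Or.inr (by simp)⟩


end PhutballQBF
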